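/- Let $T$ be a relative Rota-Baxter operator on a Leibniz triple system $(\mathfrak{L},\{\cdot,\cdot,\cdot\})$ with respect to a representation $(r,m,l)$ on $V$. Define $\{u,v,w\}_T := l(Tu,Tv)w + m(Tu,Tw)v + r(Tv,Tw)u$. Then $(V,\{\cdot,\cdot,\cdot\}_T)$ is a Leibniz triple system and $T:(V,\{\cdot,\cdot,\cdot\}_T)\to(\mathfrak{L},\{\cdot,\cdot,\cdot\})$ is a morphism of Leibniz triple systems. -/
import Mathlib


def IsTrilin (K : Type*) [Field K] {L M : Type*} [AddCommGroup L] [Module K L]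
    [AddCommGroup M] [Module K M] (t : L → L → L → M) : Prop :=
  (∀ y z, IsLinearMap K fun x => t x y z) ∧ (∀ x z, IsLinearMap K fun y => t x y z) ∧
    (∀ x y, IsLinearMap K fun z => t x y z)

def LTSIdent {L : Type*} [AddCommGroup L] (t : L → L → L → L) : Prop :=
  (∀ a b c d e, t a b (t c d e) =
      t (t a b c) d e - t (t a b d) c e - t (t a b e) c d + t (t a b e) d c) ∧
  (∀ a b c d e, t a (t b c d) e =
      t (t a b c) d e - t (t a c b) d e - t (t a d b) c e + t (t a d c) b e)

def IsLTS (K : Type*) [Field K] {L : Type*} [AddCommGroup L] [Module K L]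
    (t : L → L → L → L) : Prop := IsTrilin K t ∧ LTSIdent t

def sd {L V : Type*} [AddCommGroup L] [AddCommGroup V]
    (t : L → L → L → L) (l m r : L → L → V → V) :
    L × V → L × V → L × V → L × V :=
  fun p q s => (t p.1 q.1 s.1, l p.1 q.1 s.2 + m p.1 s.1 q.2 + r q.1 s.1 p.2)

def IsRep (K : Type*) [Field K] {L V : Type*} [AddCommGroup L] [Module K L]
    [AddCommGroup V] [Module K V] (t : L → L → L → L) (l m r : L → L → V → V) : Prop :=
  IsLTS K (sd t l m r)

def IsRRB {K : Type*} [Field K] {L V : Type*} [AddCommGroup L] [Module K L]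
    [AddCommGroup V] [Module K V] (t : L → L → L → L) (l m r : L → L → V → V)
    (T : V →ₗ[K] L) : Prop :=
  ∀ u v w, t (T u) (T v) (T w) =
    T (l (T u) (T v) w + m (T u) (T w) v + r (T v) (T w) u)

def IsRB {K : Type*} [Field K] {L : Type*} [AddCommGroup L] [Module K L]
    (t : L → L → L → L) (R : L →ₗ[K] L) : Prop :=
  ∀ x y z, t (R x) (R y) (R z) =
    R (t (R x) (R y) z + t (R x) y (R z) + t x (R y) (R z))

def IsNij {K : Type*} [Field K] {A : Type*} [AddCommGroup A] [Module K A]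
    (t : A → A → A → A) (N : A →ₗ[K] A) : Prop :=
  ∀ x y z, t (N x) (N y) (N z) =
    N (t (N x) (N y) z) + N (t x (N y) (N z)) + N (t (N x) y (N z))
      - N (N (t (N x) y z)) - N (N (t x (N y) z)) - N (N (t x y (N z)))
      + N (N (N (t x y z)))

theorem stmt8 {K : Type*} [Field K] {L V : Type*} [AddCommGroup L] [Module K L]
    [AddCommGroup V] [Module K V]
    (t : L → L → L → L) (l m r : L → L → V → V)
    (hL : IsLTS K t) (hrep : IsRep K t l m r)
    (T : V →ₗ[K] L) (hT : IsRRB t l m r T) :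
    IsLTS K (fun u v w : V => l (T u) (T v) w + m (T u) (T w) v + r (T v) (T w) u) ∧
      (∀ u v w : V,
        T (l (T u) (T v) w + m (T u) (T w) v + r (T v) (T w) u) =
          t (T u) (T v) (T w)) := by
  set b : V → V → V → V :=
    fun u v w => l (T u) (T v) w + m (T u) (T w) v + r (T v) (T w) u with hb
  have key : ∀ u v w : V,
      sd t l m r (T u, u) (T v, v) (T w, w) = (T (b u v w), b u v w) := by
    intro u v w
    simp only [sd, hb]
    exact Prod.ext (hT u v w) rfl
  refine ⟨⟨⟨?_, ?_, ?_⟩, ?_, ?_⟩, fun u v w => (hT u v w).symm⟩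
  · intro y z
    constructor
    · intro u v
      have h := (hrep.1.1 (T y, y) (T z, z)).map_add (T u, u) (T v, v)
      rw [show ((T u, u) + (T v, v) : L × V) = (T (u + v), u + v) by
        simp [Prod.ext_iff]] at h
      rw [key, key, key] at h
      simpa using congrArg Prod.snd h
    · intro c u
      have h := (hrep.1.1 (T y, y) (T z, z)).map_smul c (T u, u)
      rw [show (c • (T u, u) : L × V) = (T (c • u), c • u) by
        simp [Prod.ext_iff]] at h
      rw [key, key] at h
      simpa using congrArg Prod.snd h
  · intro x z
    constructor
    · intro u v
      have h := (hrep.1.2.1 (T x, x) (T z, z)).map_add (T u, u) (T v, v)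
      rw [show ((T u, u) + (T v, v) : L × V) = (T (u + v), u + v) by
        simp [Prod.ext_iff]] at h
      rw [key, key, key] at h
      simpa using congrArg Prod.snd h
    · intro c u
      have h := (hrep.1.2.1 (T x, x) (T z, z)).map_smul c (T u, u)
      rw [show (c • (T u, u) : L × V) = (T (c • u), c • u) by
        simp [Prod.ext_iff]] at h
      rw [key, key] at h
      simpa using congrArg Prod.snd h
  · intro x y
    constructor
    · intro u v
      have h := (hrep.1.2.2 (T x, x) (T y, y)).map_add (T u, u) (T v, v)
      rw [show ((T u, u) + (T v, v) : L × V) = (T (u + v), u + v) by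
        simp [Prod.ext_iff]] at h
      rw [key, key, key] at h
      simpa using congrArg Prod.snd h
    · intro c u
      have h := (hrep.1.2.2 (T x, x) (T y, y)).map_smul c (T u, u)
      rw [show (c • (T u, u) : L × V) = (T (c • u), c • u) by
        simp [Prod.ext_iff]] at h
      rw [key, key] at h
      simpa using congrArg Prod.snd h
  · intro a b' c d e
    have h := hrep.2.1 (T a, a) (T b', b') (T c, c) (T d, d) (T e, e)
    simp only [key] at h
    simpa using congrArg Prod.snd h
  · intro a b' c d e
    have h := hrep.2.2 (T a, a) (T b', b') (T c, c) (T d, d) (T e, e)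
    simp only [key] at h
    simpa using congrArg Prod.snd h
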